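/- Let D be a real m×m matrix and u ≠ 1 a simple eigenvalue of D whose eigenvector v has all components nonzero and satisfies Σ v_i ≠ 0 (a 'general' eigenvalue). Then there exist unique disjoint subsets I_+, I_- ⊆ {0,...,m} with I_+ ∪ I_- = {0,...,m} and 0 ∈ I_+, such that with t = 1/(1-u) there are points α ∈ relint Δ_{I_+}, β ∈ relint Δ_{I_-} satisfying (tD + (1-t)I_m)α = (tD + (1-t)I_m)β, where Δ_I = conv{e_i : i ∈ I} with e_0 := 0. -/

import Mathlib

open Polynomial

namespace Stmt1Aux

lemma charpoly_mulVecLin {m : ℕ} (D : Matrix (Fin m) (Fin m) ℝ) :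
    (Matrix.mulVecLin D).charpoly = D.charpoly := by
  rw [← LinearMap.charpoly_toMatrix (Matrix.mulVecLin D) (Pi.basisFun ℝ (Fin m)),
    LinearMap.toMatrix_eq_toMatrix', ← Matrix.toLin'_apply', LinearMap.toMatrix'_toLin']

lemma eig_mem_span {m : ℕ} (D : Matrix (Fin m) (Fin m) ℝ) (u : ℝ)
    (hs : D.charpoly.rootMultiplicity u = 1)
    (v w : Fin m → ℝ) (hv0 : v ≠ 0)
    (hv : D.mulVec v = u • v) (hw : D.mulVec w = u • w) :
    ∃ c : ℝ, w = c • v := by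
  by_contra hc
  push_neg at hc
  classical
  have hli : LinearIndependent ℝ ![v, w] :=
    (LinearIndependent.pair_iff' hv0).2 fun a ha => hc a ha.symm
  have hli2 : LinearIndepOn ℝ id (Set.range ![v, w]) :=
    (linearIndepOn_id_range_iff hli.injective).mpr hli
  let B := Module.Basis.extend hli2
  haveI : Fintype (hli2.extend (Set.subset_univ _)) := FiniteDimensional.fintypeBasisIndex B
  have hvmem : v ∈ hli2.extend (Set.subset_univ _) := hli2.subset_extend _ ⟨0, rfl⟩
  have hwmem : w ∈ hli2.extend (Set.subset_univ _) := hli2.subset_extend _ ⟨1, rfl⟩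
  let jv : hli2.extend (Set.subset_univ _) := ⟨v, hvmem⟩
  let jw : hli2.extend (Set.subset_univ _) := ⟨w, hwmem⟩
  have hvw : v ≠ w := fun h => hc 1 (by rw [one_smul]; exact h.symm)
  have hjvw : jv ≠ jw := fun h => hvw (congrArg Subtype.val h)
  set A := LinearMap.toMatrix B B (Matrix.mulVecLin D) with hAdef
  have hBv : B jv = v := Module.Basis.extend_apply_self hli2 jv
  have hBw : B jw = w := Module.Basis.extend_apply_self hli2 jw
  have hcol : ∀ (j : hli2.extend (Set.subset_univ _)) (x : Fin m → ℝ),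
      B j = x → D.mulVec x = u • x →
      ∀ i, A i j = if i = j then u else 0 := by
    intro j x hBj hx i
    rw [hAdef, LinearMap.toMatrix_apply, hBj, Matrix.mulVecLin_apply, hx, ← hBj, map_smul,
      B.repr_self, Finsupp.smul_single, smul_eq_mul, mul_one, Finsupp.single_apply]
    simp [eq_comm]
  set CA := Matrix.charmatrix A with hCA
  have hcolv : ∀ i, CA i jv = (X - C u) * (if i = jv then 1 else 0) := by
    intro i
    by_cases h : i = jv
    · subst h; rw [hCA, Matrix.charmatrix_apply_eq, hcol jv v hBv hv]; simp
    · rw [hCA, Matrix.charmatrix_apply_ne _ _ _ h, hcol jv v hBv hv]; simp [h]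
  have hcolw : ∀ i, CA i jw = (X - C u) * (if i = jw then 1 else 0) := by
    intro i
    by_cases h : i = jw
    · subst h; rw [hCA, Matrix.charmatrix_apply_eq, hcol jw w hBw hw]; simp
    · rw [hCA, Matrix.charmatrix_apply_ne _ _ _ h, hcol jw w hBw hw]; simp [h]
  have hdvd : (X - C u) ^ 2 ∣ A.charpoly := by
    have h1 : A.charpoly = (X - C u) *
        (Matrix.updateCol CA jv (fun i => if i = jv then 1 else 0)).det := by
      rw [show A.charpoly = CA.det from rfl]
      conv_lhs => rw [← Matrix.updateCol_eq_self CA jv]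
      rw [show (fun i => CA i jv) = (X - C u) • (fun i => if i = jv then (1:ℝ[X]) else 0) from
        funext fun i => by rw [hcolv i]; rfl]
      rw [Matrix.det_updateCol_smul]
    set CA' := Matrix.updateCol CA jv (fun i => if i = jv then 1 else 0) with hCA'
    have h2 : CA'.det = (X - C u) *
        (Matrix.updateCol CA' jw (fun i => if i = jw then 1 else 0)).det := by
      conv_lhs => rw [← Matrix.updateCol_eq_self CA' jw]
      rw [show (fun i => CA' i jw) = (X - C u) • (fun i => if i = jw then (1:ℝ[X]) else 0) from
        funext fun i => by
          rw [hCA', Matrix.updateCol_apply, if_neg (Ne.symm hjvw), hcolw i]; rfl]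
      rw [Matrix.det_updateCol_smul]
    rw [h1, h2, ← mul_assoc, ← sq]
    exact Dvd.intro _ rfl
  have hA : A.charpoly = D.charpoly := by
    rw [hAdef, LinearMap.charpoly_toMatrix, charpoly_mulVecLin]
  have hne : D.charpoly ≠ 0 := D.charpoly_monic.ne_zero
  have : 2 ≤ D.charpoly.rootMultiplicity u :=
    (Polynomial.le_rootMultiplicity_iff hne).2 (hA ▸ hdvd)
  omega

lemma keyM {m : ℕ} (D : Matrix (Fin m) (Fin m) ℝ) (u : ℝ) (h : (1:ℝ) - u ≠ 0)
    (x : Fin m → ℝ) :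
    ((1 / (1 - u)) • D + (1 - 1 / (1 - u)) • (1 : Matrix (Fin m) (Fin m) ℝ)).mulVec x
      = (1 / (1 - u)) • (D.mulVec x - u • x) := by
  rw [Matrix.add_mulVec, Matrix.smul_mulVec, Matrix.smul_mulVec,
    Matrix.one_mulVec, smul_sub]
  funext j
  simp only [Pi.add_apply, Pi.smul_apply, Pi.sub_apply, smul_eq_mul]
  field_simp
  ring

lemma sum_smul_e {m : ℕ} (e : Fin (m + 1) → Fin m → ℝ)
    (he0 : e 0 = 0)
    (he : ∀ i : Fin (m + 1), ∀ h : 0 < (i : ℕ),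
      e i = Pi.single (⟨(i : ℕ) - 1, (by have := i.isLt; omega : (i : ℕ) - 1 < m + 0)⟩ : Fin m) 1)
    (c : Fin (m + 1) → ℝ) :
    ∑ i, c i • e i = fun j => c j.succ := by
  have hes : ∀ j : Fin m, e j.succ = Pi.single j 1 := by
    intro j
    rw [he j.succ (by simp [Fin.val_succ])]
    congr 1
  rw [Fin.sum_univ_succ, he0, smul_zero, zero_add]
  funext k
  simp only [Finset.sum_apply, Pi.smul_apply, smul_eq_mul]
  rw [Finset.sum_eq_single k]
  · simp [hes]
  · intro j _ hj
    rw [hes j, Pi.single_apply, if_neg (Ne.symm hj), mul_zero]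
  · simp

lemma max_neg_eq (x : ℝ) : max (-x) 0 = max x 0 - x := by
  rcases le_total x 0 with h | h
  · rw [max_eq_left (neg_nonneg.2 h), max_eq_right h]; ring
  · rw [max_eq_right (neg_nonpos.2 h), max_eq_left h]; ring

lemma pos_mul_iff_same_sign {c c₀ S x : ℝ} (h1 : c * S < 0) (h2 : c₀ * S < 0) :
    (0 < c * x ↔ 0 < c₀ * x) := by
  have key_neg : ∀ d : ℝ, d < 0 → (0 < d * x ↔ x < 0) := by
    intro d hd
    rw [mul_pos_iff]
    constructor
    · rintro (⟨h, _⟩ | ⟨_, h⟩)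
      · linarith
      · exact h
    · intro h; exact Or.inr ⟨hd, h⟩
  have key_pos : ∀ d : ℝ, 0 < d → (0 < d * x ↔ 0 < x) := by
    intro d hd
    rw [mul_pos_iff]
    constructor
    · rintro (⟨_, h⟩ | ⟨h, _⟩)
      · exact h
      · linarith
    · intro h; exact Or.inl ⟨hd, h⟩
  rcases lt_trichotomy S 0 with hS | hS | hS
  · have hc : 0 < c := by nlinarith
    have hc2 : 0 < c₀ := by nlinarith
    rw [key_pos c hc, key_pos c₀ hc2]
  · rw [hS, mul_zero] at h1; linarith
  · have hc : c < 0 := by nlinarith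
    have hc2 : c₀ < 0 := by nlinarith
    rw [key_neg c hc, key_neg c₀ hc2]

end Stmt1Aux

/-- A general eigenvalue `u ≠ 1` of `D` (simple, eigenvector with nonvanishing
components whose components do not sum to zero) determines a unique bipartition
`I_+ ⊔ I_- = {0,…,m}` with `0 ∈ I_+` such that the simplices `Δ_{I_+}` and `Δ_{I_-}`
deformed to time `t = 1/(1-u)` intersect (in their relative interiors, i.e. there are
positive convex combinations with equal image under `tD + (1-t)I`). -/
theorem stmt1 (m : ℕ) (D : Matrix (Fin m) (Fin m) ℝ)
    (e : Fin (m + 1) → Fin m → ℝ)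
    (he0 : e 0 = 0)
    (he : ∀ i : Fin (m + 1), ∀ h : 0 < (i : ℕ),
      e i = Pi.single (⟨(i : ℕ) - 1, by have := i.isLt; omega⟩ : Fin m) 1)
    (u : ℝ) (hu1 : u ≠ 1)
    (hsimple : D.charpoly.rootMultiplicity u = 1)
    (v : Fin m → ℝ) (hv0 : v ≠ 0) (hev : D.mulVec v = u • v)
    (hvnz : ∀ i, v i ≠ 0) (hvsum : ∑ i, v i ≠ 0) :
    ∃! P : Finset (Fin (m + 1)) × Finset (Fin (m + 1)),
      Disjoint P.1 P.2 ∧ P.1 ∪ P.2 = Finset.univ ∧ (0 : Fin (m + 1)) ∈ P.1 ∧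
      ∃ a b : Fin (m + 1) → ℝ,
        (∀ i ∈ P.1, 0 < a i) ∧ (∀ i ∉ P.1, a i = 0) ∧ (∑ i, a i = 1) ∧
        (∀ i ∈ P.2, 0 < b i) ∧ (∀ i ∉ P.2, b i = 0) ∧ (∑ i, b i = 1) ∧
        ((1 / (1 - u)) • D + (1 - 1 / (1 - u)) • (1 : Matrix (Fin m) (Fin m) ℝ)).mulVec
            (∑ i, a i • e i)
          = ((1 / (1 - u)) • D + (1 - 1 / (1 - u)) • (1 : Matrix (Fin m) (Fin m) ℝ)).mulVec
            (∑ i, b i • e i) := by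
  classical
  have h1u : (1:ℝ) - u ≠ 0 := sub_ne_zero.mpr (Ne.symm hu1)
  have ht : (1:ℝ) / (1 - u) ≠ 0 := one_div_ne_zero h1u
  set S := ∑ i, v i with hS
  set w₀ : Fin m → ℝ := fun j => -(v j) / S with hw₀
  have hsumw₀ : ∑ j, w₀ j = -1 := by
    rw [hw₀]
    rw [← Finset.sum_div, Finset.sum_neg_distrib, ← hS, neg_div, div_self hvsum]
  set K := 1 + ∑ j, max (w₀ j) 0 with hK
  have hKpos : 0 < K := by
    have h := Finset.sum_nonneg (fun j (_ : j ∈ Finset.univ) => le_max_right (w₀ j) 0)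
    rw [hK]; linarith
  set lam := 1 / K with hlam
  have hlampos : 0 < lam := by rw [hlam]; positivity
  set c₀ := -lam / S with hc₀
  set w : Fin m → ℝ := fun j => lam * w₀ j with hw
  have hwv : ∀ j, w j = c₀ * v j := by
    intro j; rw [hw, hw₀, hc₀]; simp only; field_simp
  have hc₀S : c₀ * S < 0 := by
    rw [hc₀, div_mul_cancel₀ _ hvsum]; linarith
  have hwcv : w = c₀ • v := funext fun j => hwv j
  have hDw : D.mulVec w = u • w := by
    rw [hwcv, Matrix.mulVec_smul, hev, smul_comm]
  have hwne : ∀ j, w j ≠ 0 := fun j => by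
    rw [hwv j]
    have hc₀ne : c₀ ≠ 0 := fun h => by rw [h, zero_mul] at hc₀S; exact lt_irrefl 0 hc₀S
    exact mul_ne_zero hc₀ne (hvnz j)
  have hsumw : ∑ j, w j = -lam := by
    rw [hw, ← Finset.mul_sum, hsumw₀, mul_neg_one]
  set a : Fin (m+1) → ℝ := Fin.cases lam (fun j => max (w j) 0) with ha
  set b : Fin (m+1) → ℝ := Fin.cases 0 (fun j => max (-(w j)) 0) with hb
  have ha0 : a 0 = lam := by rw [ha]; simp
  have has : ∀ j : Fin m, a j.succ = max (w j) 0 := fun j => by rw [ha]; simp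
  have hb0 : b 0 = 0 := by rw [hb]; simp
  have hbs : ∀ j, b j.succ = max (-(w j)) 0 := fun j => by rw [hb]; simp
  have hsuma : ∑ i, a i = 1 := by
    rw [Fin.sum_univ_succ, ha0]
    have hmax : ∀ j : Fin m, a j.succ = lam * max (w₀ j) 0 := by
      intro j
      rw [has j, hw]
      simp only
      rw [mul_max_of_nonneg _ _ (le_of_lt hlampos), mul_zero]
    rw [Finset.sum_congr rfl fun j _ => hmax j, ← Finset.mul_sum]
    have hlamK : lam * K = 1 := by rw [hlam]; field_simp
    calc lam + lam * ∑ j, max (w₀ j) 0 = lam * (1 + ∑ j, max (w₀ j) 0) := by ring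
    _ = lam * K := by rw [← hK]
    _ = 1 := hlamK
  have hsuma' : ∑ j : Fin m, a j.succ = 1 - lam := by
    have h := hsuma
    rw [Fin.sum_univ_succ, ha0] at h
    linarith
  have hsumb : ∑ i, b i = 1 := by
    rw [Fin.sum_univ_succ, hb0, zero_add]
    have hmax : ∀ j : Fin m, b j.succ = a j.succ - w j := by
      intro j; rw [hbs j, has j, Stmt1Aux.max_neg_eq]
    rw [Finset.sum_congr rfl fun j _ => hmax j, Finset.sum_sub_distrib, hsuma', hsumw]
    ring
  set P1 : Finset (Fin (m+1)) := Finset.univ.filter (fun i => 0 < a i) with hP1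
  have h0P1 : (0 : Fin (m+1)) ∈ P1 := by
    rw [hP1]
    exact Finset.mem_filter.2 ⟨Finset.mem_univ _, by rw [ha0]; exact hlampos⟩
  have hmemP1 : ∀ i, i ∈ P1 ↔ 0 < a i := by
    intro i; rw [hP1]; simp [Finset.mem_filter]
  have hax : ∀ i : Fin (m+1), ¬ 0 < a i → a i = 0 := by
    intro i
    induction i using Fin.cases with
    | zero => intro h; exact absurd (by rw [ha0]; exact hlampos) h
    | succ j =>
      intro h
      rw [has] at h ⊢
      exact le_antisymm (not_lt.1 h) (le_max_right _ _)
  have hbx : ∀ i : Fin (m+1), ¬ 0 < a i → 0 < b i := by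
    intro i
    induction i using Fin.cases with
    | zero => intro h; exact absurd (by rw [ha0]; exact hlampos) h
    | succ j =>
      intro h
      rw [has] at h
      rw [hbs]
      have hwj : w j < 0 :=
        lt_of_le_of_ne (le_trans (le_max_left _ _) (not_lt.1 h)) (hwne j)
      have hpos : 0 < -(w j) := neg_pos.2 hwj
      rw [max_eq_left hpos.le]
      exact hpos
  have hbz : ∀ i : Fin (m+1), 0 < a i → b i = 0 := by
    intro i
    induction i using Fin.cases with
    | zero => intro _; exact hb0
    | succ j =>
      intro h
      rw [has] at h
      rw [hbs]
      have hwj : 0 < w j := by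
        rcases lt_max_iff.1 h with h' | h'
        · exact h'
        · exact absurd h' (lt_irrefl 0)
      rw [max_eq_right (neg_nonpos.2 hwj.le)]
  refine ⟨(P1, P1ᶜ), ⟨disjoint_compl_right, Finset.union_compl _, h0P1,
    a, b, fun i hi => (hmemP1 i).1 hi,
    fun i hi => hax i (fun h => hi ((hmemP1 i).2 h)), hsuma,
    fun i hi => hbx i (fun h => (Finset.mem_compl.1 hi) ((hmemP1 i).2 h)),
    fun i hi => hbz i ((hmemP1 i).1 (Finset.notMem_compl.1 hi)), hsumb, ?_⟩, ?_⟩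
  · -- the intersection equation
    rw [Stmt1Aux.sum_smul_e e he0 he a, Stmt1Aux.sum_smul_e e he0 he b,
      Stmt1Aux.keyM D u h1u, Stmt1Aux.keyM D u h1u]
    congr 1
    rw [sub_eq_sub_iff_sub_eq_sub, ← Matrix.mulVec_sub, ← smul_sub]
    have hab : (fun j => a j.succ) - (fun j => b j.succ) = w := by
      funext j
      simp only [Pi.sub_apply]
      rw [has, hbs, Stmt1Aux.max_neg_eq]
      ring
    rw [hab, hDw]
  · -- uniqueness
    rintro ⟨Q1, Q2⟩ ⟨hdisj, hunion, h0Q, a₁, b₁, ha₁p, ha₁z, ha₁s, hb₁p, hb₁z, hb₁s, heq⟩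
    have hQ2 : Q2 = Q1ᶜ := by
      ext i
      simp only [Finset.mem_compl]
      constructor
      · intro h2 h1; exact Finset.disjoint_left.1 hdisj h1 h2
      · intro h1
        have hiu : i ∈ Q1 ∪ Q2 := hunion ▸ Finset.mem_univ i
        rcases Finset.mem_union.1 hiu with h | h
        · exact absurd h h1
        · exact h
    rw [Stmt1Aux.sum_smul_e e he0 he a₁, Stmt1Aux.sum_smul_e e he0 he b₁,
      Stmt1Aux.keyM D u h1u, Stmt1Aux.keyM D u h1u] at heq
    have heq2 : D.mulVec (fun j => a₁ j.succ) - u • (fun j => a₁ j.succ)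
        = D.mulVec (fun j => b₁ j.succ) - u • (fun j => b₁ j.succ) :=
      smul_right_injective (Fin m → ℝ) ht heq
    set w' : Fin m → ℝ := (fun j => a₁ j.succ) - (fun j => b₁ j.succ) with hw'
    have hw'app : ∀ j, w' j = a₁ j.succ - b₁ j.succ := fun j => rfl
    have hDw' : D.mulVec w' = u • w' := by
      rw [hw', Matrix.mulVec_sub, smul_sub, sub_eq_sub_iff_sub_eq_sub]
      exact heq2
    obtain ⟨c, hwc'⟩ := Stmt1Aux.eig_mem_span D u hsimple v w' hv0 hev hDw'
    have hchar : ∀ j : Fin m, (j.succ ∈ Q1 ↔ 0 < w' j) := by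
      intro j
      constructor
      · intro hj
        have hbj : b₁ j.succ = 0 := hb₁z _ (Finset.disjoint_left.1 hdisj hj)
        have haj : 0 < a₁ j.succ := ha₁p _ hj
        rw [hw'app, hbj]; linarith
      · intro hpos
        by_contra hj
        have hjQ2 : j.succ ∈ Q2 := by rw [hQ2]; exact Finset.mem_compl.2 hj
        have haj : a₁ j.succ = 0 := ha₁z _ hj
        have hbj : 0 < b₁ j.succ := hb₁p _ hjQ2
        rw [hw'app, haj] at hpos; linarith
    have hb₁0 : b₁ 0 = 0 := hb₁z 0 (Finset.disjoint_left.1 hdisj h0Q)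
    have ha₁0pos : 0 < a₁ 0 := ha₁p 0 h0Q
    have hsumw' : ∑ j, w' j = -(a₁ 0) := by
      have h1 := ha₁s
      have h2 := hb₁s
      rw [Fin.sum_univ_succ] at h1 h2
      rw [hb₁0, zero_add] at h2
      have h3 : ∑ j, w' j = ∑ j : Fin m, a₁ j.succ - ∑ j : Fin m, b₁ j.succ := by
        rw [← Finset.sum_sub_distrib]
        exact Finset.sum_congr rfl fun j _ => hw'app j
      rw [h3]; linarith
    have hcS : c * S < 0 := by
      have h4 : ∑ j, w' j = c * S := by
        rw [hS, Finset.mul_sum]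
        exact Finset.sum_congr rfl fun j _ => by rw [hwc']; rfl
      rw [← h4, hsumw']; linarith
    have hQ1 : Q1 = P1 := by
      ext i
      induction i using Fin.cases with
      | zero => exact iff_of_true h0Q h0P1
      | succ j =>
        rw [hchar j, hmemP1, has j]
        have h5 : w' j = c * v j := by rw [hwc']; rfl
        have h6 : 0 < max (w j) 0 ↔ 0 < w j := by
          constructor
          · intro h
            rcases lt_max_iff.1 h with h' | h'
            · exact h'
            · exact absurd h' (lt_irrefl 0)
          · intro h; exact lt_max_iff.2 (Or.inl h)
        rw [h5, h6, hwv j]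
        exact Stmt1Aux.pos_mul_iff_same_sign hcS hc₀S
    refine Prod.ext hQ1 ?_
    rw [hQ2, hQ1]
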